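/- Let N ≥ 3 be odd, μ > 0, ω > 0. If ε ∈ {-1,+1}^N and a ≥ 0 are such that the N-tuple with components φ_{ω, ε_i a} satisfies the Kirchhoff vertex condition (common value at 0 and Σ_{i=1}^N ψ_i′(0) = 0), then a = 0; hence the resulting state is the N-tuple all of whose components equal φ_{ω,0}, i.e. N half-solitons joined continuously at the vertex. -/

import Mathlib

open Real MeasureTheory

/-- `sech y = 1 / cosh y`. -/
noncomputable def sech (y : ℝ) : ℝ := 1 / Real.cosh y

/-- The half-line soliton profile `φ_{ω,a}(x) = [(μ+1)ω]^{1/(2μ)} sech^{1/μ}(μ√ω (x-a))`. -/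
noncomputable def solProfile (μ ω a : ℝ) (x : ℝ) : ℝ :=
  ((μ + 1) * ω) ^ (1 / (2 * μ)) * sech (μ * Real.sqrt ω * (x - a)) ^ (1 / μ)

lemma solProfile_eq (μ ω b x : ℝ) :
    solProfile μ ω b x =
      ((μ + 1) * ω) ^ (1 / (2 * μ)) * Real.cosh (μ * Real.sqrt ω * (x - b)) ^ (-(1 / μ)) := by
  unfold solProfile sech
  rw [one_div (Real.cosh _), Real.inv_rpow (Real.cosh_pos _).le,
    ← Real.rpow_neg (Real.cosh_pos _).le]

lemma solProfile_deriv (μ ω b : ℝ) (hμ : 0 < μ) :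
    deriv (solProfile μ ω b) 0 =
      ((μ + 1) * ω) ^ (1 / (2 * μ)) * (Real.sqrt ω * Real.sinh (μ * Real.sqrt ω * b) *
        Real.cosh (μ * Real.sqrt ω * b) ^ (-(1 / μ) - 1)) := by
  have h1 : HasDerivAt (fun x : ℝ => μ * Real.sqrt ω * (x - b)) (μ * Real.sqrt ω) 0 := by
    simpa using ((hasDerivAt_id (0:ℝ)).sub_const b).const_mul (μ * Real.sqrt ω)
  have h3 := h1.cosh.rpow_const (p := -(1/μ)) (Or.inl (Real.cosh_pos _).ne')
  have h4 := h3.const_mul (((μ + 1) * ω) ^ (1 / (2 * μ)))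
  have h5 : HasDerivAt (solProfile μ ω b)
      (((μ + 1) * ω) ^ (1 / (2 * μ)) *
        (Real.sinh (μ * Real.sqrt ω * (0 - b)) * (μ * Real.sqrt ω) * (-(1 / μ)) *
          Real.cosh (μ * Real.sqrt ω * (0 - b)) ^ (-(1 / μ) - 1))) 0 := by
    have hfun : solProfile μ ω b = fun x =>
        ((μ + 1) * ω) ^ (1 / (2 * μ)) * Real.cosh (μ * Real.sqrt ω * (x - b)) ^ (-(1 / μ)) :=
      funext (solProfile_eq μ ω b)
    rw [hfun]
    exact h4
  rw [h5.deriv]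
  have e1 : μ * Real.sqrt ω * (0 - b) = -(μ * Real.sqrt ω * b) := by ring
  rw [e1, Real.sinh_neg, Real.cosh_neg]
  have : -Real.sinh (μ * Real.sqrt ω * b) * (μ * Real.sqrt ω) * (-(1 / μ)) =
      Real.sqrt ω * Real.sinh (μ * Real.sqrt ω * b) := by
    field_simp
  rw [this]

/-- let `N ≥ 3` be odd, `μ > 0`, `ω > 0`. If `ε ∈ {-1,1}^N` and `a ≥ 0` are
such that the tuple `(φ_{ω, ε_i a})_i` satisfies the Kirchhoff vertex condition (common value
at `0` and `Σ_i ψ_i′(0) = 0`), then `a = 0`, and hence every component equals `φ_{ω,0}`: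
`N` half-solitons joined continuously at the vertex. -/
theorem kirchhoff_odd_forces_a_zero (N : ℕ) (hN : 3 ≤ N) (hodd : Odd N)
    (μ ω : ℝ) (hμ : 0 < μ) (hω : 0 < ω)
    (ε : Fin N → ℝ) (hε : ∀ i, ε i = 1 ∨ ε i = -1) (a : ℝ) (ha : 0 ≤ a)
    (hcont : ∀ i j : Fin N, solProfile μ ω (ε i * a) 0 = solProfile μ ω (ε j * a) 0)
    (hkirch : (∑ i : Fin N, deriv (solProfile μ ω (ε i * a)) 0) = 0) :
    a = 0 ∧ ∀ i : Fin N, solProfile μ ω (ε i * a) = solProfile μ ω 0 := by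
  set K := ((μ + 1) * ω) ^ (1 / (2 * μ)) with hK
  have hcpos : 0 < μ * Real.sqrt ω := mul_pos hμ (Real.sqrt_pos.mpr hω)
  set M := K * (Real.sqrt ω * Real.sinh (μ * Real.sqrt ω * a) *
    Real.cosh (μ * Real.sqrt ω * a) ^ (-(1 / μ) - 1)) with hM
  have hterm : ∀ i : Fin N, deriv (solProfile μ ω (ε i * a)) 0 = ε i * M := by
    intro i
    rcases hε i with h | h
    · rw [solProfile_deriv μ ω (ε i * a) hμ, h]
      have e0 : μ * Real.sqrt ω * (1 * a) = μ * Real.sqrt ω * a := by ring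
      rw [e0, hM, hK]; ring
    · rw [solProfile_deriv μ ω (ε i * a) hμ, h]
      have e0 : μ * Real.sqrt ω * (-1 * a) = -(μ * Real.sqrt ω * a) := by ring
      rw [e0, Real.sinh_neg, Real.cosh_neg, hM, hK]; ring
  have hsum : (∑ i : Fin N, ε i) * M = 0 := by
    rw [← hkirch, Finset.sum_mul]
    exact Finset.sum_congr rfl fun i _ => (hterm i).symm
  -- the sum of an odd number of ±1's is nonzero
  have hSne : (∑ i : Fin N, ε i) ≠ 0 := by
    intro h0
    set T := Finset.univ.filter (fun i : Fin N => ε i = 1) with hT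
    set T' := Finset.univ.filter (fun i : Fin N => ¬ ε i = 1) with hT'
    have h1 : ∑ i ∈ T, ε i = (T.card : ℝ) := by
      have : ∀ i ∈ T, ε i = 1 := fun i hi => (Finset.mem_filter.mp hi).2
      rw [Finset.sum_congr rfl this]
      simp
    have h2 : ∑ i ∈ T', ε i = -(T'.card : ℝ) := by
      have : ∀ i ∈ T', ε i = -1 := by
        intro i hi
        rcases hε i with h | h
        · exact absurd h (Finset.mem_filter.mp hi).2
        · exact h
      rw [Finset.sum_congr rfl this]
      simp
    have h3 : T.card + T'.card = N := by
      rw [hT, hT', Finset.card_filter_add_card_filter_not]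
      simp
    have hsplit : (∑ i : Fin N, ε i) = (T.card : ℝ) + -(T'.card : ℝ) := by
      rw [← Finset.sum_filter_add_sum_filter_not Finset.univ (fun i => ε i = 1) ε, ← hT, ← hT',
        h1, h2]
    rw [hsplit] at h0
    have hNeq' : N = 2 * T.card := by
      have hcast : (T.card : ℝ) = (T'.card : ℝ) := by linarith
      have : T.card = T'.card := by exact_mod_cast hcast
      omega
    exact (Nat.not_even_iff_odd.mpr hodd) ⟨T.card, by omega⟩
  have hM0 : M = 0 := by
    rcases mul_eq_zero.mp hsum with h | h
    · exact absurd h hSne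
    · exact h
  have hKpos : 0 < K := Real.rpow_pos_of_pos (by positivity) _
  have hcoshpos : 0 < Real.cosh (μ * Real.sqrt ω * a) ^ (-(1 / μ) - 1) :=
    Real.rpow_pos_of_pos (Real.cosh_pos _) _
  have hsqpos : (0:ℝ) < Real.sqrt ω := Real.sqrt_pos.mpr hω
  have hsinh : Real.sinh (μ * Real.sqrt ω * a) = 0 := by
    rw [hM] at hM0
    rcases mul_eq_zero.mp hM0 with h | h
    · exact absurd h hKpos.ne'
    · rcases mul_eq_zero.mp h with h | h
      · rcases mul_eq_zero.mp h with h | h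
        · exact absurd h hsqpos.ne'
        · exact h
      · exact absurd h hcoshpos.ne'
  have hca : μ * Real.sqrt ω * a = 0 := Real.sinh_eq_zero.mp hsinh
  have ha0 : a = 0 := by
    rcases mul_eq_zero.mp hca with h | h
    · exact absurd h hcpos.ne'
    · exact h
  refine ⟨ha0, fun i => ?_⟩
  rw [ha0, mul_zero]
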